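/- Let {Λ_ω}_{ω∈Ω} be an integral K-operator Bessel family for B(H) with frame operator S. Then {Λ_ω}_{ω∈Ω} is an integral K-operator frame for B(H) if and only if K = S^{1/2} L for some L ∈ B(H). -/

import Mathlib

open MeasureTheory ContinuousLinearMap

theorem stmt_2 {H : Type*} [NormedAddCommGroup H] [InnerProductSpace ℂ H] [CompleteSpace H]
    {Ω : Type*} [MeasurableSpace Ω] (μ : Measure Ω)
    (Λ : Ω → H →L[ℂ] H) (K S sqrtS : H →L[ℂ] H) (B : ℝ) (hB : 0 < B)
    (hBessel : ∀ x : H, ∫ ω, ‖Λ ω x‖ ^ 2 ∂μ ≤ B * ‖x‖ ^ 2)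
    (hS : ∀ x : H, (inner ℂ (S x) x : ℂ).re = ∫ ω, ‖Λ ω x‖ ^ 2 ∂μ)
    (hsqrt_pos : sqrtS.IsPositive) (hsqrt : sqrtS ∘L sqrtS = S) :
    (∃ A : ℝ, 0 < A ∧ ∀ x : H, A * ‖adjoint K x‖ ^ 2 ≤ ∫ ω, ‖Λ ω x‖ ^ 2 ∂μ) ↔
      (∃ L : H →L[ℂ] H, K = sqrtS ∘L L) := by
  have hsa : IsSelfAdjoint sqrtS := hsqrt_pos.isSelfAdjoint
  -- key identity: the integral equals ‖sqrtS x‖²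
  have key : ∀ x : H, ∫ ω, ‖Λ ω x‖ ^ 2 ∂μ = ‖sqrtS x‖ ^ 2 := by
    intro x
    rw [← hS x, ← hsqrt]
    have h1 : (inner ℂ ((sqrtS ∘L sqrtS) x) x : ℂ) = inner ℂ (sqrtS x) (sqrtS x) := by
      rw [ContinuousLinearMap.comp_apply]
      rw [← ContinuousLinearMap.adjoint_inner_left, hsa.adjoint_eq]
    rw [h1]
    simpa using inner_self_eq_norm_sq (𝕜 := ℂ) (sqrtS x)
  constructor
  · rintro ⟨A, hA, hAx⟩
    -- the pointwise bound
    have hbd : ∀ x : H, A * ‖adjoint K x‖ ^ 2 ≤ ‖sqrtS x‖ ^ 2 := by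
      intro x; have := hAx x; rwa [key x] at this
    have hbd' : ∀ x : H, ‖adjoint K x‖ ≤ (Real.sqrt A)⁻¹ * ‖sqrtS x‖ := by
      intro x
      have hsA : (0:ℝ) < Real.sqrt A := Real.sqrt_pos.mpr hA
      have h' := Real.sqrt_le_sqrt (hbd x)
      rw [Real.sqrt_mul hA.le, Real.sqrt_sq (norm_nonneg _), Real.sqrt_sq (norm_nonneg _)] at h'
      rw [inv_mul_eq_div, le_div_iff₀ hsA]
      linarith
    have hker : ∀ x : H, sqrtS x = 0 → adjoint K x = 0 := by
      intro x hx
      have := hbd' x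
      rw [hx, norm_zero, mul_zero] at this
      exact norm_le_zero_iff.mp this
    set Tl : H →ₗ[ℂ] H := (sqrtS : H →ₗ[ℂ] H) with hTl
    set Kl : H →ₗ[ℂ] H := ((adjoint K : H →L[ℂ] H) : H →ₗ[ℂ] H) with hKl
    have hle : LinearMap.ker Tl ≤ LinearMap.ker Kl := by
      intro x hx
      simp only [LinearMap.mem_ker] at *
      exact hker x hx
    -- linear map on the range of sqrtS sending sqrtS x ↦ adjoint K x
    set φ : ↥(LinearMap.range Tl) →ₗ[ℂ] H :=
      (Submodule.liftQ (LinearMap.ker Tl) Kl hle).comp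
        (Tl.quotKerEquivRange.symm : ↥(LinearMap.range Tl) ≃ₗ[ℂ] (H ⧸ LinearMap.ker Tl)).toLinearMap
      with hφ
    have φ_eq : ∀ (x : H) (h : Tl x ∈ LinearMap.range Tl), φ ⟨Tl x, h⟩ = adjoint K x := by
      intro x h
      simp only [hφ, LinearMap.comp_apply, LinearEquiv.coe_coe]
      rw [LinearMap.quotKerEquivRange_symm_apply_image]
      simp [Submodule.mkQ_apply, Submodule.liftQ_apply, hKl]
    have φ_bound : ∀ y : ↥(LinearMap.range Tl), ‖φ y‖ ≤ (Real.sqrt A)⁻¹ * ‖y‖ := by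
      rintro ⟨y, hy⟩
      obtain ⟨x, rfl⟩ := hy
      have : ‖(⟨Tl x, LinearMap.mem_range_self Tl x⟩ : ↥(LinearMap.range Tl))‖ = ‖Tl x‖ := rfl
      rw [φ_eq x (LinearMap.mem_range_self Tl x), this]
      exact hbd' x
    set φc : ↥(LinearMap.range Tl) →L[ℂ] H := φ.mkContinuous ((Real.sqrt A)⁻¹) φ_bound with hφc
    set M : Submodule ℂ H := (LinearMap.range Tl).topologicalClosure with hM
    haveI : CompleteSpace M := (Submodule.isClosed_topologicalClosure _).completeSpace_coe
    set e : ↥(LinearMap.range Tl) →L[ℂ] ↥M :=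
      LinearMap.mkContinuous (Submodule.inclusion (Submodule.le_topologicalClosure _)) 1
        (fun y => le_of_eq (one_mul _).symm) with he
    have e_norm : ∀ y, ‖e y‖ = ‖y‖ := fun y => rfl
    have h_e : IsUniformInducing e :=
      (AddMonoidHomClass.isometry_of_norm e e_norm).isUniformInducing
    have h_dense : DenseRange e := by
      intro m
      rw [closure_subtype]
      have himg : (Subtype.val '' Set.range e) = ((LinearMap.range Tl : Submodule ℂ H) : Set H) := by
        ext z
        constructor
        · rintro ⟨_, ⟨y, rfl⟩, rfl⟩
          exact y.2
        · intro hz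
          exact ⟨e ⟨z, hz⟩, ⟨⟨z, hz⟩, rfl⟩, rfl⟩
      rw [himg, ← Submodule.topologicalClosure_coe]
      exact m.2
    set g : ↥M →L[ℂ] H := φc.extend e with hg
    set Lt : H →L[ℂ] H := g ∘L (M.orthogonalProjectionOnto) with hLt
    have hLtT : ∀ x : H, Lt (sqrtS x) = adjoint K x := by
      intro x
      have hmemR : sqrtS x ∈ LinearMap.range Tl := LinearMap.mem_range_self Tl x
      have hmemM : sqrtS x ∈ M := Submodule.le_topologicalClosure _ hmemR
      have h1 : M.orthogonalProjectionOnto (sqrtS x) = ⟨sqrtS x, hmemM⟩ :=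
        Submodule.orthogonalProjectionOnto_mem_subspace_eq_self (⟨sqrtS x, hmemM⟩ : M)
      have h2 : (⟨sqrtS x, hmemM⟩ : M) = e ⟨sqrtS x, hmemR⟩ := rfl
      simp only [hLt, ContinuousLinearMap.comp_apply, h1, h2]
      rw [ContinuousLinearMap.extend_eq (h_dense := h_dense) (h_e := h_e)]
      rw [hφc]
      show φ ⟨Tl x, hmemR⟩ = adjoint K x
      exact φ_eq x hmemR
    refine ⟨adjoint Lt, ?_⟩
    have hadj : adjoint K = Lt ∘L sqrtS := by
      ext x
      simp [hLtT x]
    calc K = adjoint (adjoint K) := (adjoint_adjoint K).symm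
      _ = adjoint (Lt ∘L sqrtS) := by rw [hadj]
      _ = adjoint sqrtS ∘L adjoint Lt := adjoint_comp Lt sqrtS
      _ = sqrtS ∘L adjoint Lt := by rw [hsa.adjoint_eq]
  · rintro ⟨L, rfl⟩
    refine ⟨(‖adjoint L‖ ^ 2 + 1)⁻¹, by positivity, fun x => ?_⟩
    rw [key x]
    have h1 : adjoint (sqrtS ∘L L) x = adjoint L (sqrtS x) := by
      rw [adjoint_comp, hsa.adjoint_eq]; rfl
    rw [h1]
    have h2 : ‖adjoint L (sqrtS x)‖ ≤ ‖adjoint L‖ * ‖sqrtS x‖ := (adjoint L).le_opNorm _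
    have h3 : (0:ℝ) < ‖adjoint L‖ ^ 2 + 1 := by positivity
    rw [inv_mul_le_iff₀ h3]
    nlinarith [norm_nonneg (adjoint L (sqrtS x)), norm_nonneg (sqrtS x), norm_nonneg (adjoint L)]
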